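/- With mutually orthogonal smooth projections Pᵢ summing to 1 and indices i ≠ k, the 3-forms satisfy tr(dPᵢ dPₖ dPₖ) = - tr(dPₖ dPᵢ dPᵢ). -/

import Mathlib

/-- The trace of a continuous linear endomorphism. -/
noncomputable def trL {H : Type*} [NormedAddCommGroup H] [InnerProductSpace ℂ H]
    (T : H →L[ℂ] H) : ℂ :=
  LinearMap.trace ℂ H T.toLinearMap

/-- The alternation (evaluation of the 3-form built from the 3-linear expression `f`). -/
def alt3 {E : Type*} (f : E → E → E → ℂ) (u v w : E) : ℂ :=
  f u v w - f v u w - f u w v + f v w u + f w u v - f w v u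

theorem aux_antisym {E H : Type*}
    [NormedAddCommGroup H] [InnerProductSpace ℂ H] [FiniteDimensional ℂ H]
    (Qi Qk : H →L[ℂ] H) (X Y : E → (H →L[ℂ] H))
    (qik : Qi * Qk = 0) (qkk : Qk * Qk = Qk)
    (e1 : ∀ a, X a * Qk = -(Qi * Y a))
    (e2 : ∀ a, Y a * Qi = -(Qk * X a))
    (e3 : ∀ a, Qi * X a + X a * Qi = X a)
    (e4 : ∀ a, Qk * Y a + Y a * Qk = Y a)
    (u v w : E) :
    alt3 (fun a b c => trL (X a * Y b * Y c)) u v w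
      = - alt3 (fun a b c => trL (Y a * X b * X c)) u v w := by
  have tmul : ∀ A B : H →L[ℂ] H, trL (A * B) = trL (B * A) := fun A B =>
    LinearMap.trace_mul_comm ℂ A.toLinearMap B.toLinearMap
  have trLadd : ∀ A B : H →L[ℂ] H, trL (A + B) = trL A + trL B := by
    intro A B; simp [trL]
  have trLsub : ∀ A B : H →L[ℂ] H, trL (A - B) = trL A - trL B := by
    intro A B; simp [trL]
  have trLneg : ∀ A : H →L[ℂ] H, trL (-A) = -trL A := by
    intro A; simp [trL]
  have trL0 : trL (0 : H →L[ℂ] H) = 0 := by simp [trL]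
  -- Qk commutes with products of two Y's
  have hC2 : ∀ a b, Qk * (Y a * Y b) = Y a * Y b * Qk := by
    intro a b
    have ha : Qk * Y a = Y a - Y a * Qk := eq_sub_of_add_eq (e4 a)
    have hb : Qk * Y b = Y b - Y b * Qk := eq_sub_of_add_eq (e4 b)
    calc Qk * (Y a * Y b) = (Qk * Y a) * Y b := by noncomm_ring
      _ = (Y a - Y a * Qk) * Y b := by rw [ha]
      _ = Y a * Y b - Y a * (Qk * Y b) := by noncomm_ring
      _ = Y a * Y b - Y a * (Y b - Y b * Qk) := by rw [hb]
      _ = Y a * Y b * Qk := by noncomm_ring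
  have hA : ∀ c, Qk * (Y c * Qi) = Y c * Qi := by
    intro c; rw [e2 c, mul_neg, ← mul_assoc, qkk]
  -- the vanishing trace lemma: tr(Qi Y Y Y) = 0
  have Z1 : ∀ a b c, trL (Qi * (Y a * Y b * Y c)) = 0 := by
    intro a b c
    have h1 : Y a * Y b * Y c * Qi = Qk * (Y a * Y b * Y c * Qi) := by
      calc Y a * Y b * Y c * Qi = (Y a * Y b) * (Qk * (Y c * Qi)) := by
            rw [hA c]; noncomm_ring
        _ = (Qk * (Y a * Y b)) * (Y c * Qi) := by rw [hC2 a b]; noncomm_ring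
        _ = Qk * (Y a * Y b * Y c * Qi) := by noncomm_ring
    have h2 : (Y a * Y b * Y c * Qi) * Qk = 0 := by
      calc (Y a * Y b * Y c * Qi) * Qk = (Y a * Y b * Y c) * (Qi * Qk) := by noncomm_ring
        _ = 0 := by rw [qik, mul_zero]
    calc trL (Qi * (Y a * Y b * Y c)) = trL ((Y a * Y b * Y c) * Qi) := tmul _ _
      _ = trL (Qk * (Y a * Y b * Y c * Qi)) := by rw [← h1]
      _ = trL ((Y a * Y b * Y c * Qi) * Qk) := tmul _ _
      _ = 0 := by rw [h2, trL0]
  -- the key pointwise identity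
  have key : ∀ a b c, trL (X a * Y b * Y c)
      = -(trL (Y b * (X c * X a)) - trL (Qk * (Y b * (X c * X a))))
        - trL (Qk * (Y c * (X a * X b))) := by
    intro a b c
    have split : X a * Y b * Y c = X a * Qk * Y b * Y c + X a * (Y b * Qk) * Y c := by
      calc X a * Y b * Y c = X a * (Qk * Y b + Y b * Qk) * Y c := by rw [e4 b]
        _ = X a * Qk * Y b * Y c + X a * (Y b * Qk) * Y c := by noncomm_ring
    have T1 : trL (X a * Qk * Y b * Y c) = 0 := by
      have hop : X a * Qk * Y b * Y c = -(Qi * (Y a * Y b * Y c)) := by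
        rw [e1 a]; noncomm_ring
      rw [hop, trLneg, Z1 a b c, neg_zero]
    have split2 : X a * (Y b * Qk) * Y c
        = Qi * X a * (Y b * Qk) * Y c + X a * Qi * (Y b * Qk) * Y c := by
      calc X a * (Y b * Qk) * Y c = (Qi * X a + X a * Qi) * (Y b * Qk) * Y c := by rw [e3 a]
        _ = Qi * X a * (Y b * Qk) * Y c + X a * Qi * (Y b * Qk) * Y c := by noncomm_ring
    have h1 : Qi * Y b = -(X b * Qk) := by rw [e1 b, neg_neg]
    have hT2b : X a * Qi * (Y b * Qk) * Y c = -(X a * X b * Qk * Y c) := by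
      calc X a * Qi * (Y b * Qk) * Y c = X a * (Qi * Y b) * Qk * Y c := by noncomm_ring
        _ = X a * -(X b * Qk) * Qk * Y c := by rw [h1]
        _ = -(X a * X b * (Qk * Qk) * Y c) := by noncomm_ring
        _ = -(X a * X b * Qk * Y c) := by rw [qkk]
    have hT2a : trL (Qi * X a * (Y b * Qk) * Y c) = -trL (Qk * (X c * X a * Y b)) := by
      have assoc1 : Qi * X a * (Y b * Qk) * Y c = (Qi * X a * Y b) * (Qk * Y c) := by
        noncomm_ring
      have h3 : Qk * (Y c * Qi) = -(Qk * X c) := by rw [e2 c, mul_neg, ← mul_assoc, qkk]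
      have h2 : (Qk * Y c) * (Qi * X a * Y b) = -(Qk * (X c * X a * Y b)) := by
        calc (Qk * Y c) * (Qi * X a * Y b) = (Qk * (Y c * Qi)) * (X a * Y b) := by
              noncomm_ring
          _ = -(Qk * X c) * (X a * Y b) := by rw [h3]
          _ = -(Qk * (X c * X a * Y b)) := by noncomm_ring
      rw [assoc1, tmul, h2, trLneg]
    have P3 : trL (X a * X b * Qk * Y c) = trL (Qk * (Y c * (X a * X b))) := by
      rw [(by noncomm_ring : X a * X b * Qk * Y c = (X a * X b) * (Qk * Y c)), tmul,
        (by noncomm_ring : (Qk * Y c) * (X a * X b) = Qk * (Y c * (X a * X b)))]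
    have P4 : trL (Qk * (X c * X a * Y b))
        = trL (Y b * (X c * X a)) - trL (Qk * (Y b * (X c * X a))) := by
      have hYb : Y b * Qk = Y b - Qk * Y b := eq_sub_of_add_eq' (e4 b)
      calc trL (Qk * (X c * X a * Y b))
          = trL ((Qk * (X c * X a)) * Y b) := by
            rw [(by noncomm_ring : Qk * (X c * X a * Y b) = (Qk * (X c * X a)) * Y b)]
        _ = trL (Y b * (Qk * (X c * X a))) := tmul _ _
        _ = trL ((Y b * Qk) * (X c * X a)) := by
            rw [(by noncomm_ring : Y b * (Qk * (X c * X a)) = (Y b * Qk) * (X c * X a))]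
        _ = trL ((Y b - Qk * Y b) * (X c * X a)) := by rw [hYb]
        _ = trL (Y b * (X c * X a) - (Qk * Y b) * (X c * X a)) := by rw [sub_mul]
        _ = trL (Y b * (X c * X a)) - trL (Qk * (Y b * (X c * X a))) := by
            rw [trLsub, (by noncomm_ring : (Qk * Y b) * (X c * X a) = Qk * (Y b * (X c * X a)))]
    calc trL (X a * Y b * Y c)
        = trL (X a * Qk * Y b * Y c) + trL (X a * (Y b * Qk) * Y c) := by
          rw [← trLadd, ← split]
      _ = trL (X a * (Y b * Qk) * Y c) := by rw [T1, zero_add]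
      _ = trL (Qi * X a * (Y b * Qk) * Y c) + trL (X a * Qi * (Y b * Qk) * Y c) := by
          rw [← trLadd, ← split2]
      _ = -trL (Qk * (X c * X a * Y b)) + -trL (X a * X b * Qk * Y c) := by
          rw [hT2a, hT2b, trLneg]
      _ = -(trL (Y b * (X c * X a)) - trL (Qk * (Y b * (X c * X a))))
            - trL (Qk * (Y c * (X a * X b))) := by rw [P4, P3]; ring
  simp only [alt3]
  rw [key u v w, key v u w, key u w v, key v w u, key w u v, key w v u]
  simp only [(by intros; rw [mul_assoc] : ∀ A B C : H →L[ℂ] H, A * B * C = A * (B * C))]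
  ring

/-- For smooth mutually orthogonal projections summing to `1` and `i ≠ k`,
the 3-forms satisfy `tr(dPᵢ dPₖ dPₖ) = - tr(dPₖ dPᵢ dPᵢ)`. -/
theorem three_form_antisymmetry
    {E H : Type*} [NormedAddCommGroup E] [NormedSpace ℝ E]
    [NormedAddCommGroup H] [InnerProductSpace ℂ H] [FiniteDimensional ℂ H]
    {n : ℕ} (P : Fin n → E → (H →L[ℂ] H))
    (hPdiff : ∀ i, Differentiable ℝ (P i))
    (hsa : ∀ i m, IsSelfAdjoint (P i m))
    (horth : ∀ i j m, P i m * P j m = if i = j then P i m else 0)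
    (hsum : ∀ m, ∑ i, P i m = 1)
    (i k : Fin n) (hik : i ≠ k) (m : E) :
    ∀ u v w : E,
      alt3 (fun a b c => trL ((fderiv ℝ (P i) m a) * (fderiv ℝ (P k) m b) *
        (fderiv ℝ (P k) m c))) u v w =
      - alt3 (fun a b c => trL ((fderiv ℝ (P k) m a) * (fderiv ℝ (P i) m b) *
        (fderiv ℝ (P i) m c))) u v w := by
  intro u v w
  have hprod : ∀ (j l : Fin n) (a : E),
      P j m * (fderiv ℝ (P l) m a) + (fderiv ℝ (P j) m a) * P l m
        = fderiv ℝ (fun y => P j y * P l y) m a := by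
    intro j l a
    rw [fderiv_fun_mul' (hPdiff j m) (hPdiff l m)]
    simp only [ContinuousLinearMap.add_apply, ContinuousLinearMap.smul_apply,
      ContinuousLinearMap.smulRight_apply, smul_eq_mul, op_smul_eq_mul]
  have hzero : ∀ (j l : Fin n), j ≠ l → ∀ a : E,
      P j m * (fderiv ℝ (P l) m a) + (fderiv ℝ (P j) m a) * P l m = 0 := by
    intro j l hjl a
    have hfun : (fun y => P j y * P l y) = fun _ : E => (0 : H →L[ℂ] H) := by
      funext y; rw [horth j l y, if_neg hjl]
    rw [hprod j l a, hfun, fderiv_const_apply]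
    rfl
  have hsame : ∀ (j : Fin n) (a : E),
      P j m * (fderiv ℝ (P j) m a) + (fderiv ℝ (P j) m a) * P j m
        = fderiv ℝ (P j) m a := by
    intro j a
    have hfun : (fun y => P j y * P j y) = P j := by
      funext y; rw [horth j j y, if_pos rfl]
    rw [hprod j j a, hfun]
  have qik : P i m * P k m = 0 := by rw [horth i k m, if_neg hik]
  have qkk : P k m * P k m = P k m := by rw [horth k k m, if_pos rfl]
  exact aux_antisym (P i m) (P k m)
    (fun a => fderiv ℝ (P i) m a) (fun a => fderiv ℝ (P k) m a)
    qik qkk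
    (fun a => eq_neg_of_add_eq_zero_left (by
      have := hzero i k hik a; rw [add_comm] at this; exact this))
    (fun a => eq_neg_of_add_eq_zero_left (by
      have := hzero k i (Ne.symm hik) a; rw [add_comm] at this; exact this))
    (fun a => hsame i a)
    (fun a => hsame k a)
    u v w
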